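/- Let C ⊆ E be a nonempty convex set and x ∈ C. Then N(C,x) = (N(C,x) ∩ lin(C)) + lin(C)^⊥, and the following are equivalent: (i) N(C,x) is a linear subspace of E; (ii) x ∈ ri(C); (iii) N(C,x) = lin(C)^⊥. -/

import Mathlib

open scoped Pointwise RealInnerProductSpace

variable {E : Type*} [NormedAddCommGroup E] [InnerProductSpace ℝ E] [FiniteDimensional ℝ E]

/-- `F` is a face of the convex set `C`: a convex subset of `C` such that whenever an open
segment between two points of `C` meets `F`, both endpoints belong to `F`. -/
def IsFace (C F : Set E) : Prop :=
  Convex ℝ F ∧ F ⊆ C ∧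
    ∀ x ∈ C, ∀ y ∈ C, (openSegment ℝ x y ∩ F).Nonempty → x ∈ F ∧ y ∈ F

/-- The exposed face `F⊥(C,u)` of `C` by the vector `u`: the points of `C` where `⟨u,·⟩`
attains its supremum over `C`. -/
def expFace (C : Set E) (u : E) : Set E :=
  {x ∈ C | ∀ y ∈ C, ⟪u, y⟫ ≤ ⟪u, x⟫}

/-- `F` is an exposed face of `C`: either `∅`, or `C`, or `F⊥(C,u)` for some nonzero `u`. -/
def IsExpFace (C F : Set E) : Prop :=
  F = ∅ ∨ F = C ∨ ∃ u : E, u ≠ 0 ∧ F = expFace C u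

/-- The normal cone `N(C,x)` of `C` at the point `x`. -/
def normalCone (C : Set E) (x : E) : Set E :=
  {u | ∀ y ∈ C, ⟪u, y - x⟫ ≤ 0}

/-- The normal cone `N(C,F)` of `C` at a subset `F`; for a nonempty convex `F ⊆ C` it agrees
with `normalCone C x` for any `x` in the relative interior of `F` (all these coincide), and
for `F = ∅` it is all of `E`. -/
def normalConeOf (C F : Set E) : Set E :=
  ⋂ x ∈ intrinsicInterior ℝ F, normalCone C x

/-- `N` is a normal cone of `C`: the normal cone of some face of `C`. -/
def IsNormalCone (C N : Set E) : Prop :=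
  ∃ F, IsFace C F ∧ N = normalConeOf C F

/-- `T` is a touching cone of `C`: a nonempty face of a normal cone of `C`. -/
def IsTouchingCone (C T : Set E) : Prop :=
  T.Nonempty ∧ ∃ N, IsNormalCone C N ∧ IsFace N T

/-- The positive hull of a set: all finite nonnegative combinations (`posHull ∅ = {0}`). -/
def posHull (S : Set E) : Set E :=
  {x | ∃ (k : ℕ) (c : Fin k → ℝ) (s : Fin k → E),
    (∀ i, 0 ≤ c i) ∧ (∀ i, s i ∈ S) ∧ x = ∑ i, c i • s i}

/-- A vector `u` is sharp normal for `C` if every `x ∈ ri(F⊥(C,u))` satisfies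
`u ∈ ri(N(C,x))`. -/
def SharpNormal (C : Set E) (u : E) : Prop :=
  ∀ x ∈ intrinsicInterior ℝ (expFace C u), u ∈ intrinsicInterior ℝ (normalCone C x)

/-- A point `x` is sharp exposed in `C` if every nonzero `u ∈ ri(N(C,x))` satisfies
`x ∈ ri(F⊥(C,u))`. -/
def SharpExposed (C : Set E) (x : E) : Prop :=
  ∀ u ∈ intrinsicInterior ℝ (normalCone C x), u ≠ 0 → x ∈ intrinsicInterior ℝ (expFace C u)

/-- The smallest exposed face of `C` containing `F`: the intersection of all exposed faces
of `C` containing `F`. -/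
def supExp (C F : Set E) : Set E :=
  ⋂₀ {G | IsExpFace C G ∧ F ⊆ G}

/-- The polar body of `K`. -/
def polarBody (K : Set E) : Set E := {u | ∀ y ∈ K, ⟪u, y⟫ ≤ 1}

theorem mem_intrinsic_iff (C : Set E) (x : E) (hx : x ∈ C) :
    x ∈ intrinsicInterior ℝ C ↔
      ∃ ε > 0, ∀ v ∈ (affineSpan ℝ C).direction, ‖v‖ < ε → x + v ∈ C := by
  constructor
  · rintro ⟨y, hy, rfl⟩
    rw [mem_interior_iff_mem_nhds, Metric.mem_nhds_iff] at hy
    obtain ⟨ε, hε, hball⟩ := hy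
    refine ⟨ε, hε, fun v hv hvn => ?_⟩
    have hmem : (↑y : E) + v ∈ affineSpan ℝ C := by
      have := AffineSubspace.vadd_mem_of_mem_direction hv y.2
      simpa [vadd_eq_add, add_comm] using this
    have : (⟨(↑y : E) + v, hmem⟩ : affineSpan ℝ C) ∈ Metric.ball y ε := by
      simp [Metric.mem_ball, Subtype.dist_eq, dist_eq_norm, hvn]
    exact hball this
  · rintro ⟨ε, hε, h⟩
    have hxa : x ∈ affineSpan ℝ C := subset_affineSpan ℝ C hx
    refine ⟨⟨x, hxa⟩, ?_, rfl⟩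
    rw [mem_interior_iff_mem_nhds, Metric.mem_nhds_iff]
    refine ⟨ε, hε, fun q hq => ?_⟩
    have hv : (↑q : E) - x ∈ (affineSpan ℝ C).direction :=
      AffineSubspace.vsub_mem_direction q.2 hxa
    have : x + ((↑q : E) - x) ∈ C := by
      apply h _ hv
      simpa [Subtype.dist_eq, dist_eq_norm] using hq
    simpa using this

theorem support_vec (C : Set E) (hC : Convex ℝ C) (x : E) (hx : x ∈ C)
    (hnot : x ∉ intrinsicInterior ℝ C) :
    ∃ u : E, u ≠ 0 ∧ u ∈ (affineSpan ℝ C).direction ∧ ∀ y ∈ C, ⟪u, y - x⟫ ≤ 0 := by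
  set V := (affineSpan ℝ C).direction with hV
  set D : Set V := {v : V | x + (v : E) ∈ C} with hD
  have hDconv : Convex ℝ D := by
    intro a ha b hb s t hs ht hst
    show x + ((s • a + t • b : V) : E) ∈ C
    have h2 := hC ha hb hs ht hst
    have he : s • (x + (a : E)) + t • (x + (b : E)) = x + ((s • a + t • b : V) : E) := by
      push_cast
      have hx1 : s • x + t • x = x := by rw [← add_smul, hst, one_smul]
      rw [smul_add, smul_add, add_add_add_comm, hx1]
    rwa [he] at h2
  -- interior of D is nonempty
  obtain ⟨z, hz⟩ := (intrinsicInterior_nonempty hC).2 ⟨x, hx⟩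
  have hzC : z ∈ C := intrinsicInterior_subset hz
  obtain ⟨ε, hε, hball⟩ := (mem_intrinsic_iff C z hzC).1 hz
  have hzx : z - x ∈ V := AffineSubspace.vsub_mem_direction (subset_affineSpan ℝ C hzC)
      (subset_affineSpan ℝ C hx)
  set w : V := ⟨z - x, hzx⟩ with hw
  have hwint : w ∈ interior D := by
    rw [mem_interior_iff_mem_nhds, Metric.mem_nhds_iff]
    refine ⟨ε, hε, fun v hv => ?_⟩
    have : z + ((v - w : V) : E) ∈ C := by
      apply hball _ (v - w).2
      simpa [Subtype.dist_eq, dist_eq_norm] using hv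
    have he : x + (v : E) = z + ((v - w : V) : E) := by
      push_cast [hw]
      abel
    rw [hD]; simp only [Set.mem_setOf_eq, he]; exact this
  have h0 : (0 : V) ∉ interior D := by
    intro h
    rw [mem_interior_iff_mem_nhds, Metric.mem_nhds_iff] at h
    obtain ⟨δ, hδ, hb⟩ := h
    apply hnot
    rw [mem_intrinsic_iff C x hx]
    refine ⟨δ, hδ, fun v hv hvn => ?_⟩
    have : (⟨v, hv⟩ : V) ∈ Metric.ball (0 : V) δ := by
      simpa [Metric.mem_ball, dist_eq_norm] using hvn
    exact hb this
  obtain ⟨f, hf⟩ := geometric_hahn_banach_open_point (hDconv.interior) isOpen_interior h0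
  simp only [map_zero] at hf
  have hfD : ∀ d ∈ D, f d ≤ 0 := by
    intro d hd
    by_contra hpos
    push_neg at hpos
    -- use combo: for small a, a • w + (1-a) • d ∈ interior D, f of it < 0, contradiction as a → 0
    have key : ∀ a : ℝ, 0 < a → a ≤ 1 → a * f w + (1 - a) * f d < 0 := by
      intro a ha ha1
      have hm := hDconv.combo_interior_self_mem_interior hwint hd ha
        (by linarith : (0:ℝ) ≤ 1 - a) (by ring)
      have := hf _ hm
      simpa [map_add, map_smul, smul_eq_mul] using this
    -- choose a small enough
    obtain ⟨a, ha0, ha1, hlt⟩ : ∃ a : ℝ, 0 < a ∧ a ≤ 1 ∧ a * (f d - f w) < f d := by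
      rcases le_or_gt (f d - f w) 0 with h | h
      · exact ⟨1, one_pos, le_refl _, by nlinarith⟩
      · refine ⟨min 1 (f d / (2 * (f d - f w))), ?_, min_le_left _ _, ?_⟩
        · exact lt_min one_pos (by positivity)
        · calc min 1 (f d / (2 * (f d - f w))) * (f d - f w)
              ≤ (f d / (2 * (f d - f w))) * (f d - f w) := by
                apply mul_le_mul_of_nonneg_right (min_le_right _ _) h.le
            _ = f d / 2 := by field_simp
            _ < f d := by linarith
    have := key a ha0 ha1
    nlinarith
  -- f represented by inner product
  obtain ⟨u₀, hu₀⟩ : ∃ u₀ : V, ∀ v : V, ⟪u₀, v⟫ = f v :=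
    ⟨(InnerProductSpace.toDual ℝ V).symm f, fun v => by
      simp [InnerProductSpace.toDual_symm_apply]⟩
  refine ⟨(u₀ : E), ?_, u₀.2, ?_⟩
  · intro h
    have hu0 : u₀ = 0 := by exact_mod_cast h
    have hlt := hf w hwint
    rw [← hu₀ w, hu0] at hlt
    simp at hlt
  · intro y hy
    have hyx : y - x ∈ V := AffineSubspace.vsub_mem_direction (subset_affineSpan ℝ C hy)
      (subset_affineSpan ℝ C hx)
    have hdd : (⟨y - x, hyx⟩ : V) ∈ D := by
      show x + (y - x) ∈ C
      simpa using hy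
    have := hfD _ hdd
    have hin : ⟪(u₀ : E), y - x⟫ = f (⟨y - x, hyx⟩ : V) := hu₀ ⟨y - x, hyx⟩
    rw [hin]; exact this

/-- For a nonempty convex set `C` and `x ∈ C`:
`N(C,x) = (N(C,x) ∩ lin C) + lin(C)^⊥`, and `N(C,x)` is a linear subspace iff
`x ∈ ri(C)` iff `N(C,x) = lin(C)^⊥`. -/
theorem stmt_3 (C : Set E) (hC : Convex ℝ C) (hne : C.Nonempty) (x : E) (hx : x ∈ C) :
    normalCone C x =
      (normalCone C x ∩ ((affineSpan ℝ C).direction : Set E)) +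
        ((((affineSpan ℝ C).direction)ᗮ : Submodule ℝ E) : Set E) ∧
    ((∃ W : Submodule ℝ E, normalCone C x = (W : Set E)) ↔ x ∈ intrinsicInterior ℝ C) ∧
    (x ∈ intrinsicInterior ℝ C ↔
      normalCone C x = ((((affineSpan ℝ C).direction)ᗮ : Submodule ℝ E) : Set E)) := by
  set V := (affineSpan ℝ C).direction with hV
  have hsub : ∀ y ∈ C, y - x ∈ V := fun y hy =>
    AffineSubspace.vsub_mem_direction (subset_affineSpan ℝ C hy) (subset_affineSpan ℝ C hx)
  -- V^⊥ ⊆ normal cone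
  have hperpN : (Vᗮ : Set E) ⊆ normalCone C x := by
    intro b hb y hy
    rw [Submodule.inner_left_of_mem_orthogonal (hsub y hy) hb]
  -- projection stays in the normal cone
  have hinner : ∀ u : E, ∀ y ∈ C, ⟪((V.orthogonalProjection u : V) : E), y - x⟫ = ⟪u, y - x⟫ := by
    intro u y hy
    have h0 : ⟪u - ((V.orthogonalProjection u : V) : E), y - x⟫ = 0 :=
      Submodule.inner_left_of_mem_orthogonal (hsub y hy)
        (Submodule.sub_starProjection_mem_orthogonal u)
    rw [inner_sub_left] at h0
    linarith
  have hprojN : ∀ u ∈ normalCone C x, ((V.orthogonalProjection u : V) : E) ∈ normalCone C x := by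
    intro u hu y hy
    rw [hinner u y hy]
    exact hu y hy
  -- Part 1: decomposition
  have part1 : normalCone C x = (normalCone C x ∩ (V : Set E)) + ((Vᗮ : Submodule ℝ E) : Set E) := by
    ext u
    constructor
    · intro hu
      rw [Set.mem_add]
      exact ⟨((V.orthogonalProjection u : V) : E), ⟨hprojN u hu, (V.orthogonalProjection u).2⟩,
        u - ((V.orthogonalProjection u : V) : E), Submodule.sub_starProjection_mem_orthogonal u,
        by abel⟩
    · rw [Set.mem_add]
      rintro ⟨a, ⟨haN, haV⟩, b, hb, rfl⟩
      intro y hy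
      have hb0 : ⟪b, y - x⟫ = 0 := Submodule.inner_left_of_mem_orthogonal (hsub y hy) hb
      have := haN y hy
      rw [inner_add_left, hb0]
      linarith
  -- ri → N = V^⊥
  have h3f : x ∈ intrinsicInterior ℝ C → normalCone C x = ((Vᗮ : Submodule ℝ E) : Set E) := by
    intro hri
    apply Set.Subset.antisymm _ hperpN
    intro u hu
    obtain ⟨ε, hε, hball⟩ := (mem_intrinsic_iff C x hx).1 hri
    set a : E := ((V.orthogonalProjection u : V) : E) with ha
    have haN : a ∈ normalCone C x := hprojN u hu
    have ha0 : a = 0 := by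
      by_contra hne0
      have hna : 0 < ‖a‖ := norm_pos_iff.2 hne0
      set t : ℝ := ε / (2 * ‖a‖) with ht
      have htpos : 0 < t := by positivity
      have hvmem : t • a ∈ V := Submodule.smul_mem V t (V.orthogonalProjection u).2
      have hvn : ‖t • a‖ < ε := by
        rw [norm_smul, Real.norm_eq_abs, abs_of_pos htpos, ht]
        rw [div_mul_eq_mul_div, mul_comm]
        rw [div_lt_iff₀ (by positivity)]
        nlinarith
      have hyC : x + t • a ∈ C := hball _ hvmem hvn
      have := haN _ hyC
      simp only [add_sub_cancel_left] at this
      rw [real_inner_smul_right, real_inner_self_eq_norm_sq] at this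
      exact absurd this (not_le.2 (mul_pos htpos (pow_pos hna 2)))
    have : u - a ∈ Vᗮ := Submodule.sub_starProjection_mem_orthogonal u
    rw [ha0, sub_zero] at this
    exact this
  -- N = V^⊥ → ri
  have h3b : normalCone C x = ((Vᗮ : Submodule ℝ E) : Set E) → x ∈ intrinsicInterior ℝ C := by
    intro hN
    by_contra hnot
    obtain ⟨u, hu0, huV, huN⟩ := support_vec C hC x hx hnot
    have huperp : u ∈ Vᗮ := by rw [← SetLike.mem_coe, ← hN]; exact huN
    have : ⟪u, u⟫ = 0 := Submodule.inner_right_of_mem_orthogonal huV huperp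
    exact hu0 (inner_self_eq_zero.1 this)
  refine ⟨part1, ⟨?_, fun hri => ⟨Vᗮ, h3f hri⟩⟩, h3f, h3b⟩
  rintro ⟨W, hW⟩
  apply h3b
  apply Set.Subset.antisymm _ hperpN
  intro u hu
  set a : E := ((V.orthogonalProjection u : V) : E) with ha
  have haN : a ∈ normalCone C x := hprojN u hu
  have hanegN : -a ∈ normalCone C x := by
    rw [hW] at haN ⊢
    exact neg_mem haN
  have heq : ∀ y ∈ C, ⟪a, y - x⟫ = 0 := by
    intro y hy
    have h1 := haN y hy
    have h2 := hanegN y hy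
    rw [inner_neg_left] at h2
    linarith
  have haperp : a ∈ Vᗮ := by
    rw [Submodule.mem_orthogonal]
    intro w hw
    rw [hV, direction_affineSpan, vectorSpan_def] at hw
    induction hw using Submodule.span_induction with
    | mem g hg =>
      obtain ⟨y1, hy1, y2, hy2, rfl⟩ := hg
      show ⟪y1 - y2, a⟫ = 0
      have h1 := heq y1 hy1
      have h2 := heq y2 hy2
      rw [real_inner_comm] at h1 h2
      have h12 : y1 - y2 = (y1 - x) - (y2 - x) := by abel
      rw [h12, inner_sub_left, h1, h2, sub_zero]
    | zero => exact inner_zero_left a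
    | add g1 g2 _ _ h1 h2 => rw [inner_add_left, h1, h2, add_zero]
    | smul c g _ h => rw [real_inner_smul_left, h, mul_zero]
  have ha0 : a = 0 := by
    have : ⟪a, a⟫ = 0 :=
      Submodule.inner_right_of_mem_orthogonal (V.orthogonalProjection u).2 haperp
    exact inner_self_eq_zero.1 this
  have : u - ((V.orthogonalProjection u : V) : E) ∈ Vᗮ := Submodule.sub_starProjection_mem_orthogonal (K := V) u
  rw [← ha, ha0, sub_zero] at this
  exact this
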